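/- Let W ∈ ℝ^{m×n} and let K_W be the cone generated by the rows of W, with dim K_W = rank(W) = r. If K_W is pointed, then ConeRank(W) = r; if K_W is non-pointed, then ConeRank(W) = r + 1. -/

import Mathlib

/-- The polyhedral cone generated by the rows of a matrix `W`:
the set of nonnegative linear combinations `λᵀ W` of the rows of `W`. -/
def coneOf {m n : ℕ} (W : Matrix (Fin m) (Fin n) ℝ) : Set (Fin n → ℝ) :=
  {x | ∃ l : Fin m → ℝ, 0 ≤ l ∧ x = Matrix.vecMul l W}

/-- `ConeRank(W)`: the minimum `k` such that there exists `V ∈ ℝ^{k×n}` with `K_W ⊆ K_V`. -/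
noncomputable def coneRank {m n : ℕ} (W : Matrix (Fin m) (Fin n) ℝ) : ℕ :=
  sInf {k : ℕ | ∃ V : Matrix (Fin k) (Fin n) ℝ, coneOf W ⊆ coneOf V}

section Aux
open Matrix Finset Submodule

lemma vecMul_eq_sum' {m n : ℕ} (l : Fin m → ℝ) (W : Matrix (Fin m) (Fin n) ℝ) :
    Matrix.vecMul l W = ∑ i, l i • W i := by
  funext j
  simp [Matrix.vecMul, dotProduct, Finset.sum_apply]

lemma zero_mem_coneOf {m n : ℕ} (W : Matrix (Fin m) (Fin n) ℝ) : 0 ∈ coneOf W :=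
  ⟨0, le_refl _, by simp [vecMul_eq_sum']⟩

lemma row_mem_coneOf {m n : ℕ} (W : Matrix (Fin m) (Fin n) ℝ) (i : Fin m) :
    W i ∈ coneOf W := by
  classical
  refine ⟨Pi.single i 1, ?_, ?_⟩
  · intro j; by_cases h : j = i <;> simp [Pi.single_apply, h]
  · rw [vecMul_eq_sum']
    rw [Finset.sum_eq_single i]
    · simp
    · intro b _ hb; simp [Pi.single_apply, hb]
    · simp

lemma coneOf_subset_span {m n : ℕ} (W : Matrix (Fin m) (Fin n) ℝ) :
    coneOf W ⊆ (Submodule.span ℝ (Set.range W) : Submodule ℝ (Fin n → ℝ)) := by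
  rintro x ⟨l, -, rfl⟩
  rw [vecMul_eq_sum']
  exact Submodule.sum_mem _ fun i _ =>
    Submodule.smul_mem _ _ (Submodule.subset_span ⟨i, rfl⟩)

/-- substitution: if every row of W is in the cone of V, the cone of W is contained. -/
lemma coneOf_subset_of_rows {m k n : ℕ} (W : Matrix (Fin m) (Fin n) ℝ)
    (V : Matrix (Fin k) (Fin n) ℝ) (h : ∀ i, W i ∈ coneOf V) :
    coneOf W ⊆ coneOf V := by
  choose μ hμ0 hμ using h
  rintro x ⟨l, hl, rfl⟩
  refine ⟨fun j => ∑ i, l i * μ i j, ?_, ?_⟩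
  · intro j
    exact Finset.sum_nonneg fun i _ => mul_nonneg (hl i) (hμ0 i j)
  · rw [vecMul_eq_sum', vecMul_eq_sum']
    calc ∑ i, l i • W i
        = ∑ i, ∑ a, (l i * μ i a) • V a := by
          refine Finset.sum_congr rfl fun i _ => ?_
          rw [hμ i, vecMul_eq_sum', Finset.smul_sum]
          simp [smul_smul]
      _ = ∑ a, ∑ i, (l i * μ i a) • V a := Finset.sum_comm
      _ = ∑ a : Fin k, (∑ i, l i * μ i a) • V a := by
          refine Finset.sum_congr rfl fun a _ => ?_
          rw [Finset.sum_smul]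

lemma span_coneOf_le {m n : ℕ} (W : Matrix (Fin m) (Fin n) ℝ) :
    Submodule.span ℝ (coneOf W) ≤ Submodule.span ℝ (Set.range W) :=
  Submodule.span_le.mpr (coneOf_subset_span W)

/-- Lemma A: lower bound. -/
lemma le_of_cone_subset {m k n r : ℕ} (W : Matrix (Fin m) (Fin n) ℝ)
    (V : Matrix (Fin k) (Fin n) ℝ)
    (hdim : Module.finrank ℝ ↥(Submodule.span ℝ (coneOf W)) = r)
    (h : coneOf W ⊆ coneOf V) : r ≤ k := by
  have h1 : Submodule.span ℝ (coneOf W) ≤ Submodule.span ℝ (Set.range V) :=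
    le_trans (Submodule.span_mono h) (span_coneOf_le V)
  have h2 := Submodule.finrank_mono h1
  rw [hdim] at h2
  calc r ≤ _ := h2
      _ ≤ Fintype.card (Fin k) := finrank_range_le_card V
      _ = k := Fintype.card_fin k

/-- Lemma B: in the nonpointed case, k = r is impossible. -/
lemma nonpointed_not_r {m n r : ℕ} (W : Matrix (Fin m) (Fin n) ℝ)
    (hdim : Module.finrank ℝ ↥(Submodule.span ℝ (coneOf W)) = r)
    (x : Fin n → ℝ) (hx : x ∈ coneOf W) (hxne : x ≠ 0) (hnx : -x ∈ coneOf W)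
    (V : Matrix (Fin r) (Fin n) ℝ) (h : coneOf W ⊆ coneOf V) : False := by
  have h1 : Submodule.span ℝ (coneOf W) ≤ Submodule.span ℝ (Set.range V) :=
    le_trans (Submodule.span_mono h) (span_coneOf_le V)
  have h2 := Submodule.finrank_mono h1
  rw [hdim] at h2
  have h3 : Module.finrank ℝ ↥(Submodule.span ℝ (Set.range V)) = r :=
    le_antisymm ((finrank_range_le_card V).trans_eq (Fintype.card_fin r)) h2
  have hli : LinearIndependent ℝ V := by
    refine linearIndependent_iff_card_eq_finrank_span.mpr ?_
    simp [Set.finrank, h3]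
  obtain ⟨l1, hl1, he1⟩ := h hx
  obtain ⟨l2, hl2, he2⟩ := h hnx
  have hsum : ∑ i, (l1 + l2) i • V i = 0 := by
    have : Matrix.vecMul (l1 + l2) V = 0 := by
      rw [Matrix.add_vecMul, ← he1, ← he2]; simp
    rw [← vecMul_eq_sum', this]
  have hz := Fintype.linearIndependent_iff.mp hli (l1 + l2) hsum
  have hl10 : l1 = 0 := by
    funext i
    have := hz i
    have a := hl1 i; have b := hl2 i
    simp only [Pi.zero_apply] at a b
    simp only [Pi.add_apply] at this
    simp only [Pi.zero_apply]
    linarith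
  apply hxne
  rw [he1, hl10]
  simp [vecMul_eq_sum']

/-- Non-pointed upper bound: the span of the cone is contained in the cone of r+1 vectors. -/
lemma exists_V_nonpointed {m n r : ℕ} (W : Matrix (Fin m) (Fin n) ℝ)
    (hdim : Module.finrank ℝ ↥(Submodule.span ℝ (coneOf W)) = r) :
    ∃ V : Matrix (Fin (r + 1)) (Fin n) ℝ, coneOf W ⊆ coneOf V := by
  set S := Submodule.span ℝ (coneOf W) with hS
  haveI : FiniteDimensional ℝ S := inferInstance
  obtain b := Module.finBasisOfFinrankEq ℝ S hdim
  set u : Fin r → (Fin n → ℝ) := fun k => (b k : Fin n → ℝ) with hu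
  refine ⟨(Fin.snoc u (-(∑ k, u k)) : Fin (r+1) → Fin n → ℝ), ?_⟩
  intro x hx
  have hxS : x ∈ S := Submodule.subset_span hx
  set c : Fin r → ℝ := fun k => b.repr ⟨x, hxS⟩ k with hc
  have hrep : x = ∑ k, c k • u k := by
    conv_lhs => rw [show x = ((⟨x, hxS⟩ : S) : Fin n → ℝ) from rfl, ← b.sum_repr ⟨x, hxS⟩]
    push_cast
    rfl
  set t : ℝ := ∑ k, |c k| with ht
  have ht0 : 0 ≤ t := Finset.sum_nonneg fun k _ => abs_nonneg _
  have hct : ∀ k, 0 ≤ c k + t := by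
    intro k
    have : |c k| ≤ t := Finset.single_le_sum (f := fun k => |c k|)
      (fun k _ => abs_nonneg _) (Finset.mem_univ k)
    have := neg_abs_le (c k)
    linarith
  refine ⟨Fin.snoc (fun k => c k + t) t, ?_, ?_⟩
  · intro a
    refine Fin.lastCases ?_ ?_ a
    · simpa using ht0
    · intro k; simpa using hct k
  · refine Eq.trans ?_ (vecMul_eq_sum' _ _).symm; rw [Fin.sum_univ_castSucc]
    simp only [Fin.snoc_castSucc, Fin.snoc_last, Matrix.of_apply]
    rw [hrep]
    simp only [Matrix.of_apply, Fin.snoc_castSucc, Fin.snoc_last, add_smul, smul_neg,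
      Finset.smul_sum, Finset.sum_add_distrib, neg_smul, one_smul]
    abel

lemma smul_row_mem_coneOf {m n : ℕ} (W : Matrix (Fin m) (Fin n) ℝ) (i : Fin m)
    {a : ℝ} (ha : 0 ≤ a) : a • W i ∈ coneOf W := by
  classical
  refine ⟨Pi.single i a, ?_, ?_⟩
  · intro j; by_cases h : j = i <;> simp [Pi.single_apply, h, ha]
  · rw [vecMul_eq_sum']
    rw [Finset.sum_eq_single i]
    · simp
    · intro b _ hb; simp [Pi.single_apply, hb]
    · simp

/-- r = 0 pointed (actually any) case -/
lemma exists_V_zero {m n : ℕ} (W : Matrix (Fin m) (Fin n) ℝ)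
    (hdim : Module.finrank ℝ ↥(Submodule.span ℝ (coneOf W)) = 0) :
    ∃ V : Matrix (Fin 0) (Fin n) ℝ, coneOf W ⊆ coneOf V := by
  refine ⟨0, ?_⟩
  intro x hx
  have hxS : x ∈ Submodule.span ℝ (coneOf W) := Submodule.subset_span hx
  rw [Submodule.finrank_eq_zero] at hdim
  rw [hdim, Submodule.mem_bot] at hxS
  exact ⟨0, le_refl _, by simp [hxS, vecMul_eq_sum']⟩

/-- Separation: a linear functional positive on all nonzero rows of a pointed cone. -/
lemma exists_pos_functional {m n : ℕ} (W : Matrix (Fin m) (Fin n) ℝ)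
    (hp : ∀ x ∈ coneOf W, x ≠ 0 → -x ∉ coneOf W) :
    ∃ φ : (Fin n → ℝ) →ₗ[ℝ] ℝ, ∀ i, W i ≠ 0 → 0 < φ (W i) := by
  classical
  set D : Set (Fin m → ℝ) :=
    stdSimplex ℝ (Fin m) ∩ {μ | ∀ i, W i = 0 → μ i = 0} with hD
  set L := W.vecMulLinear with hL
  set C : Set (Fin n → ℝ) := L '' D with hC
  have hDconv : Convex ℝ D := by
    refine (convex_stdSimplex ℝ _).inter ?_
    intro a ha b hb s t hs ht hst
    intro i hi
    simp [ha i hi, hb i hi]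
  have hCconv : Convex ℝ C := hDconv.linear_image L
  have hDclosed : IsClosed ({μ : Fin m → ℝ | ∀ i, W i = 0 → μ i = 0}) := by
    have : {μ : Fin m → ℝ | ∀ i, W i = 0 → μ i = 0} =
        ⋂ i, {μ : Fin m → ℝ | W i = 0 → μ i = 0} := by
      ext μ; simp
    rw [this]
    refine isClosed_iInter fun i => ?_
    by_cases h : W i = 0
    · have : {μ : Fin m → ℝ | W i = 0 → μ i = 0} = {μ | μ i = 0} := by
        ext μ; simp [h]
      rw [this]
      exact isClosed_eq (continuous_apply i) continuous_const
    · have : {μ : Fin m → ℝ | W i = 0 → μ i = 0} = Set.univ := by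
        ext μ; simp [h]
      rw [this]; exact isClosed_univ
  have hDcomp : IsCompact D := (isCompact_stdSimplex ℝ (Fin m)).inter_right hDclosed
  have hCcomp : IsCompact C := hDcomp.image L.continuous_of_finiteDimensional
  have h0notC : (0 : Fin n → ℝ) ∉ C := by
    rintro ⟨μ, ⟨⟨hμ0, hμ1⟩, hμz⟩, hμeq⟩
    -- some positive coordinate
    have : ∃ i, 0 < μ i := by
      by_contra hcon
      push_neg at hcon
      have : ∀ i, μ i = 0 := fun i => le_antisymm (hcon i) (hμ0 i)
      rw [Finset.sum_congr rfl (fun i _ => this i)] at hμ1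
      simp at hμ1
    obtain ⟨i0, hi0⟩ := this
    have hWi0 : W i0 ≠ 0 := by
      intro h; exact absurd (hμz i0 h) (ne_of_gt hi0)
    set x := μ i0 • W i0 with hx
    have hxW : x ∈ coneOf W := smul_row_mem_coneOf W i0 (le_of_lt hi0)
    have hxne : x ≠ 0 := smul_ne_zero (ne_of_gt hi0) hWi0
    have hnx : -x ∈ coneOf W := by
      refine ⟨Function.update μ i0 0, ?_, ?_⟩
      · intro j
        by_cases h : j = i0
        · subst h; simp
        · simp [Function.update_of_ne h, hμ0 j]
      · have hstot : ∑ i, μ i • W i = 0 := by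
          have h := hμeq
          rw [hL] at h
          rw [Matrix.vecMulLinear_apply, vecMul_eq_sum'] at h
          exact h
        rw [vecMul_eq_sum']
        have h1 : ∑ i ∈ Finset.univ.erase i0, Function.update μ i0 0 i • W i
            = ∑ i ∈ Finset.univ.erase i0, μ i • W i :=
          Finset.sum_congr rfl fun i hi => by
            rw [Function.update_of_ne (Finset.ne_of_mem_erase hi)]
        have h2 : ∑ i ∈ Finset.univ.erase i0, μ i • W i + μ i0 • W i0 = ∑ i, μ i • W i :=
          Finset.sum_erase_add _ _ (Finset.mem_univ i0)
        have h3 : ∑ i, Function.update μ i0 0 i • W i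
            = ∑ i ∈ Finset.univ.erase i0, μ i • W i := by
          rw [← Finset.sum_erase_add _ _ (Finset.mem_univ i0), h1]
          simp
        rw [h3]
        rw [hstot] at h2
        rw [eq_neg_of_add_eq_zero_left h2, hx]
    exact hp x hxW hxne hnx
  obtain ⟨f, u, hfu, hfC⟩ := geometric_hahn_banach_point_closed hCconv hCcomp.isClosed h0notC
  refine ⟨f.toLinearMap, fun i hi => ?_⟩
  have hmem : W i ∈ C := by
    refine ⟨Pi.single i 1, ⟨⟨?_, ?_⟩, ?_⟩, ?_⟩
    · intro j; by_cases h : j = i <;> simp [Pi.single_apply, h]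
    · simp
    · intro j hj
      by_cases h : j = i
      · subst h; exact absurd hj hi
      · simp [Pi.single_apply, h]
    · simp only [Matrix.vecMulLinear_apply, hL]
      rw [vecMul_eq_sum', Finset.sum_eq_single i]
      · simp
      · intro b _ hb; simp [Pi.single_apply, hb]
      · simp
  have h0 : f 0 = 0 := map_zero f
  have := hfC _ hmem
  simp only [h0] at hfu
  exact lt_trans hfu this

set_option maxHeartbeats 1000000 in
set_option synthInstance.maxHeartbeats 1000000 in
lemma exists_V_pointed_succ {m n s : ℕ} (W : Matrix (Fin m) (Fin n) ℝ)
    (hdim : Module.finrank ℝ ↥(Submodule.span ℝ (coneOf W)) = s + 1)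
    (hp : ∀ x ∈ coneOf W, x ≠ 0 → -x ∉ coneOf W) :
    ∃ V : Matrix (Fin (s + 1)) (Fin n) ℝ, coneOf W ⊆ coneOf V := by
  classical
  obtain ⟨φ, hφ⟩ := exists_pos_functional W hp
  set S := Submodule.span ℝ (coneOf W) with hSdef
  have hWS : ∀ i, W i ∈ S := fun i => Submodule.subset_span (row_mem_coneOf W i)
  have hex : ∃ i0, W i0 ≠ 0 := by
    by_contra hcon
    push_neg at hcon
    have hzero : coneOf W ⊆ (⊥ : Submodule ℝ (Fin n → ℝ)) := by
      rintro x ⟨l, -, rfl⟩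
      rw [vecMul_eq_sum']
      simp [hcon]
    have : S = ⊥ := le_bot_iff.mp (Submodule.span_le.mpr hzero)
    rw [this] at hdim
    simp [finrank_bot] at hdim
  obtain ⟨i0, hi0⟩ := hex
  set t : Fin m → ℝ := fun i => φ (W i) with htdef
  have hti0 : 0 < t i0 := hφ i0 hi0
  set z : Fin n → ℝ := (t i0)⁻¹ • W i0 with hzdef
  have hzS : z ∈ S := Submodule.smul_mem _ _ (hWS i0)
  have hφz : φ z = 1 := by
    rw [hzdef, _root_.map_smul, smul_eq_mul]
    exact inv_mul_cancel₀ (ne_of_gt hti0)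
  set ψ : S →ₗ[ℝ] ℝ := φ.domRestrict S with hψdef
  have hψtop : LinearMap.range ψ = ⊤ := by
    have h1 : (1 : ℝ) ∈ LinearMap.range ψ := ⟨⟨z, hzS⟩, hφz⟩
    rw [eq_top_iff]
    intro y _
    have := Submodule.smul_mem (LinearMap.range ψ) y h1
    simpa using this
  have hker0 : Module.finrank ℝ (LinearMap.ker ψ) = s := by
    have h := LinearMap.finrank_range_add_finrank_ker ψ
    rw [hψtop, hdim, finrank_top, Module.finrank_self] at h
    omega
  set K : Submodule ℝ (Fin n → ℝ) := S ⊓ LinearMap.ker φ with hKdef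
  have hkerEq : LinearMap.ker ψ = Submodule.comap S.subtype K := by
    ext x
    simp only [LinearMap.mem_ker, Submodule.mem_comap, hKdef, Submodule.mem_inf,
      Submodule.coe_subtype, hψdef, LinearMap.domRestrict_apply, LinearMap.mem_ker]
    exact ⟨fun h => ⟨x.2, h⟩, fun h => h.2⟩
  have hker : Module.finrank ℝ ↥K = s := by
    have e : ↥(LinearMap.ker ψ) ≃ₗ[ℝ] ↥K := by
      rw [hkerEq]
      exact Submodule.comapSubtypeEquivOfLe inf_le_left
    exact (e.symm.finrank_eq).trans hker0
  have bu : Module.Basis (Fin s) ℝ ↥K := Module.finBasisOfFinrankEq ℝ ↥K hker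
  set u : Fin s → (Fin n → ℝ) := fun k => ((bu k : Fin n → ℝ)) with hu
  have hgmem : ∀ i, W i - t i • z ∈ K := by
    intro i
    rw [hKdef, Submodule.mem_inf]
    constructor
    · exact Submodule.sub_mem _ (hWS i) (Submodule.smul_mem _ _ hzS)
    · rw [LinearMap.mem_ker, map_sub, _root_.map_smul, hφz]
      simp [htdef]
  set g : Fin m → K := fun i => ⟨_, hgmem i⟩ with hg
  set q : Fin m → Fin s → ℝ := fun i k => bu.repr (g i) k with hq
  have hdecomp : ∀ i, W i = t i • z + ∑ k, q i k • u k := by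
    intro i
    have h := bu.sum_repr (g i)
    have h2 : (((∑ k, q i k • bu k : K)) : Fin n → ℝ) = W i - t i • z := by
      rw [h]
    have h3 : (((∑ k, q i k • bu k : K)) : Fin n → ℝ) = ∑ k, q i k • u k := by
      push_cast
      rfl
    rw [← h3, h2]
    abel
  have hqz : ∀ i, W i = 0 → t i = 0 ∧ ∀ k, q i k = 0 := by
    intro i h
    have ht' : t i = 0 := by rw [htdef]; simp [h]
    refine ⟨ht', fun k => ?_⟩
    have hgz : g i = 0 := by
      apply Subtype.ext
      show W i - t i • z = 0
      rw [h, ht']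
      simp
    rw [hq]
    simp only [hgz, map_zero]
    rfl
  have ht0 : ∀ i, 0 ≤ t i := by
    intro i
    by_cases h : W i = 0
    · rw [(hqz i h).1]
    · exact (hφ i h).le
  set B : Fin m → ℝ := fun i => if W i = 0 then 0 else (∑ k, |q i k|) / t i with hB
  have hB0 : ∀ i, 0 ≤ B i := by
    intro i
    rw [hB]
    by_cases h : W i = 0
    · simp [h]
    · simp only [h, if_false]
      exact div_nonneg (Finset.sum_nonneg fun k _ => abs_nonneg _) (ht0 i)
  set M : ℝ := 1 + ∑ i, B i with hM
  have hM1 : 1 ≤ M := by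
    have : 0 ≤ ∑ i, B i := Finset.sum_nonneg fun i _ => hB0 i
    rw [hM]; linarith
  have hM0 : 0 < M := lt_of_lt_of_le one_pos hM1
  have habs : ∀ i, W i ≠ 0 → ∑ k, |q i k| ≤ M * t i := by
    intro i h
    have hti : 0 < t i := hφ i h
    have hBi : B i ≤ M := by
      have h1 : B i ≤ ∑ j, B j :=
        Finset.single_le_sum (fun j _ => hB0 j) (Finset.mem_univ i)
      rw [hM]; linarith
    have : (∑ k, |q i k|) / t i ≤ M := by
      rw [hB] at hBi; simpa [h] using hBi
    calc ∑ k, |q i k| = ((∑ k, |q i k|) / t i) * t i := by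
          field_simp
      _ ≤ M * t i := mul_le_mul_of_nonneg_right this hti.le
  have hb1 : ∀ i k, 0 ≤ q i k + M * t i := by
    intro i k
    by_cases h : W i = 0
    · obtain ⟨h1, h2⟩ := hqz i h
      rw [h1, h2 k]; simp
    · have h1 : |q i k| ≤ ∑ j, |q i j| :=
        Finset.single_le_sum (f := fun j => |q i j|) (fun j _ => abs_nonneg _)
          (Finset.mem_univ k)
      have h2 := habs i h
      have h3 := neg_abs_le (q i k)
      linarith
  have hb2 : ∀ i, ∑ k, q i k ≤ M * t i := by
    intro i
    by_cases h : W i = 0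
    · obtain ⟨h1, h2⟩ := hqz i h
      rw [h1]
      rw [Finset.sum_congr rfl fun k _ => h2 k]
      simp
    · calc ∑ k, q i k ≤ ∑ k, |q i k| :=
            Finset.sum_le_sum fun k _ => le_abs_self _
        _ ≤ M * t i := habs i h
  set R : ℝ := ((s : ℝ) + 1) * M with hR
  have hR0 : 0 < R := by
    have : (0 : ℝ) < (s : ℝ) + 1 := by positivity
    exact mul_pos this hM0
  set base : Fin n → ℝ := z - M • ∑ k, u k with hbase
  set V : Fin (s + 1) → Fin n → ℝ := Fin.cons base (fun k => base + R • u k) with hV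
  refine ⟨V, coneOf_subset_of_rows W V ?_⟩
  intro i
  set c : Fin s → ℝ := fun k => (q i k + M * t i) / R with hc
  have hcR : ∀ k, c k * R = q i k + M * t i := fun k => div_mul_cancel₀ _ (ne_of_gt hR0)
  have hc0 : ∀ k, 0 ≤ c k := fun k => div_nonneg (hb1 i k) hR0.le
  have hsumc : ∑ k, c k ≤ t i := by
    have h1 : ∑ k, c k = (∑ k, (q i k + M * t i)) / R := by
      rw [hc, Finset.sum_div]
    rw [h1, div_le_iff₀ hR0]
    rw [Finset.sum_add_distrib, Finset.sum_const, Finset.card_univ, Fintype.card_fin,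
      nsmul_eq_mul]
    have h2 := hb2 i
    have h3 := ht0 i
    rw [hR]
    nlinarith
  refine ⟨Fin.cons (t i - ∑ k, c k) c, ?_, ?_⟩
  · intro a
    refine Fin.cases ?_ ?_ a
    · simpa using sub_nonneg.mpr hsumc
    · intro k; simpa using hc0 k
  · refine Eq.trans ?_ (vecMul_eq_sum' _ _).symm; rw [Fin.sum_univ_succ]
    simp only [Fin.cons_zero, Fin.cons_succ, hV]
    have e1 : ∑ k, c k • (base + R • u k) = (∑ k, c k) • base + ∑ k, (c k * R) • u k := by
      simp only [smul_add, smul_smul]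
      rw [Finset.sum_add_distrib, Finset.sum_smul]
    rw [e1]
    have e2 : ∑ k, (c k * R) • u k = ∑ k, (q i k + M * t i) • u k :=
      Finset.sum_congr rfl fun k _ => by rw [hcR k]
    rw [e2]
    have e3 : (t i - ∑ k, c k) • base + ((∑ k, c k) • base + ∑ k, (q i k + M * t i) • u k)
        = t i • base + ∑ k, (q i k + M * t i) • u k := by
      rw [sub_smul]
      abel
    rw [e3, hdecomp i]
    have e4 : ∑ k, (q i k + M * t i) • u k
        = ∑ k, q i k • u k + (M * t i) • ∑ k, u k := by
      rw [Finset.smul_sum, ← Finset.sum_add_distrib]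
      exact Finset.sum_congr rfl fun k _ => add_smul _ _ _
    have e5 : t i • base = t i • z - (M * t i) • ∑ k, u k := by
      rw [hbase, smul_sub, smul_smul (t i) M, mul_comm (t i) M]
    rw [e4, e5]
    abel


end Aux

/-- Let `K_W` be the cone generated by the rows of `W`, with
`dim K_W = rank(W) = r`.  If `K_W` is pointed then `ConeRank(W) = r`; if `K_W` is
non-pointed then `ConeRank(W) = r + 1`. -/
theorem coneRank_pointed_nonpointed {m n r : ℕ} (W : Matrix (Fin m) (Fin n) ℝ)
    (hdim : Module.finrank ℝ ↥(Submodule.span ℝ (coneOf W)) = r)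
    (hrank : W.rank = r) :
    ((∀ x ∈ coneOf W, x ≠ 0 → -x ∉ coneOf W) → coneRank W = r) ∧
    ((¬ ∀ x ∈ coneOf W, x ≠ 0 → -x ∉ coneOf W) → coneRank W = r + 1) := by
  constructor
  · intro hp
    have hmem : r ∈ {k : ℕ | ∃ V : Matrix (Fin k) (Fin n) ℝ, coneOf W ⊆ coneOf V} := by
      cases r with
      | zero => exact exists_V_zero W hdim
      | succ s => exact exists_V_pointed_succ W hdim hp
    refine le_antisymm (Nat.sInf_le hmem) ?_
    refine le_csInf ⟨r, hmem⟩ ?_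
    rintro k ⟨V, hV⟩
    exact le_of_cone_subset W V hdim hV
  · intro hnp
    push_neg at hnp
    obtain ⟨x, hx, hxne, hnx⟩ := hnp
    have hmem : r + 1 ∈ {k : ℕ | ∃ V : Matrix (Fin k) (Fin n) ℝ, coneOf W ⊆ coneOf V} :=
      exists_V_nonpointed W hdim
    refine le_antisymm (Nat.sInf_le hmem) ?_
    refine le_csInf ⟨r + 1, hmem⟩ ?_
    rintro k ⟨V, hV⟩
    have h1 : r ≤ k := le_of_cone_subset W V hdim hV
    rcases eq_or_lt_of_le h1 with he | hlt
    · subst he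
      exact absurd (nonpointed_not_r W hdim x hx hxne hnx V hV) not_false
    · omega
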